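/- Every tree T satisfies ρ(T) ≤ 4, where ρ is the stroll-nonrepetitive chromatic number; in particular π(T) ≤ 4. -/
import Mathlib


def tbl : List ℕ :=
  [0,3,1,2,3,0,2,1,
   0,3,1,2,3,0,1,2,
   0,3,2,1,3,0,2,1,
   0,3,2,1,3,0,1,2]
def B (a j : ℕ) : ℕ := tbl.getD (a % 4 * 8 + j % 8) 0

def H2 (x y u : ℕ) : ℕ :=
  if u < 64 then B (B x (u / 8)) (u % 8) else B (B y ((u - 64) / 8)) ((u - 64) % 8)

set_option synthInstance.maxSize 2000
set_option maxHeartbeats 4000000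

theorem chk_B_lt4 : ∀ a < 4, ∀ j < 8, B a j < 4 := by decide
theorem chk_adj : ∀ x < 4, ∀ j < 7, B x j ≠ B x (j+1) := by decide
theorem chk_start : ∀ y < 4, B y 0 = 0 := by decide
theorem chk_end : ∀ x < 4, B x 7 ≠ 0 := by decide
theorem chk_inj : ∀ a < 4, ∀ b < 4, (∀ l < 8, B a l = B b l) → a = b := by decide

theorem chk_sync : ∀ x < 4, ∀ y < 4, x ≠ y → ∀ a < 4, ∀ r < 8, 0 < r →
    ∃ j < 8, (if r + j < 8 then B x (r + j) else B y (r + j - 8)) ≠ B a j := by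
  decide

theorem chk_small : ∀ x < 4, ∀ y < 4, x ≠ y → ∀ d < 16, 2 ≤ d → ∀ s < 64,
    ∃ j < d - 1, H2 x y (s + j) ≠ H2 x y (s + j + d) := by decide

theorem B_mod (a j : ℕ) : B a j = B (a % 4) (j % 8) := by
  unfold B; congr 1; omega

theorem B_lt4 (a j : ℕ) : B a j < 4 := by
  rw [B_mod]
  exact chk_B_lt4 _ (Nat.mod_lt _ (by norm_num)) _ (Nat.mod_lt _ (by norm_num))

def w (n : ℕ) : ℕ :=
  if h : n = 0 then 0 else B (w (n / 8)) (n % 8)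
decreasing_by exact Nat.div_lt_self (Nat.pos_of_ne_zero h) (by norm_num)

theorem w_zero : w 0 = 0 := by unfold w; simp

theorem w_eq (n : ℕ) : w n = B (w (n / 8)) (n % 8) := by
  rcases Nat.eq_zero_or_pos n with h | h
  · subst h; rw [w_zero]; simp [w_zero]; decide
  · conv_lhs => rw [w]
    rw [dif_neg (by omega)]

theorem w_lt4 (n : ℕ) : w n < 4 := by rw [w_eq]; exact B_lt4 _ _

theorem w_adj (n : ℕ) : w n ≠ w (n + 1) := by
  rcases Nat.eq_zero_or_pos ((n+1) % 8) with h | h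
  · -- block boundary: w (n+1) = 0, w n = B x 7 ≠ 0
    have h7 : n % 8 = 7 := by omega
    have e1 : w (n+1) = 0 := by
      rw [w_eq, h, chk_start _ (w_lt4 _)]
    have e2 : w n ≠ 0 := by
      rw [w_eq, h7]; exact chk_end _ (w_lt4 _)
    rw [e1]; exact e2
  · have hd : (n+1) / 8 = n / 8 := by omega
    have hm : (n+1) % 8 = n % 8 + 1 := by omega
    have h7 : n % 8 < 7 := by omega
    rw [w_eq n, w_eq (n+1), hd, hm]
    exact chk_adj _ (w_lt4 _) _ h7

theorem w_sync (p a : ℕ) (ha : a < 4) (h : ∀ j < 8, w (p + j) = B a j) :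
    p % 8 = 0 := by
  by_contra hr
  obtain ⟨j, hj8, hne⟩ := chk_sync (w (p/8)) (w_lt4 _) (w (p/8 + 1)) (w_lt4 _)
    (w_adj _) a ha (p % 8) (Nat.mod_lt _ (by norm_num)) (by omega)
  apply hne
  rw [← h j hj8, w_eq (p + j)]
  by_cases hc : p % 8 + j < 8
  · have e1 : (p + j) / 8 = p / 8 := by omega
    have e2 : (p + j) % 8 = p % 8 + j := by omega
    rw [if_pos hc, e1, e2]
  · have e1 : (p + j) / 8 = p / 8 + 1 := by omega
    have e2 : (p + j) % 8 = p % 8 + j - 8 := by omega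
    rw [if_neg hc, e1, e2]

theorem w_eq2 (n : ℕ) : w n = B (B (w (n / 64)) (n / 8 % 8)) (n % 8) := by
  rw [w_eq n, w_eq (n/8)]
  have : n / 8 / 8 = n / 64 := by omega
  rw [this]

theorem w_small (d i : ℕ) (h2 : 2 ≤ d) (h16 : d < 16)
    (hw : ∀ j < d - 1, w (i + j) = w (i + j + d)) : False := by
  have key : ∀ j, i % 64 + j < 128 → w (i + j) = H2 (w (i/64)) (w (i/64 + 1)) (i % 64 + j) := by
    intro j hj
    by_cases hc : i % 64 + j < 64
    · have e1 : (i + j) / 64 = i / 64 := by omega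
      have e2 : (i + j) / 8 % 8 = (i % 64 + j) / 8 := by omega
      have e3 : (i + j) % 8 = (i % 64 + j) % 8 := by omega
      rw [w_eq2, H2, if_pos hc, e1, e2, e3]
    · have e1 : (i + j) / 64 = i / 64 + 1 := by omega
      have e2 : (i + j) / 8 % 8 = (i % 64 + j - 64) / 8 := by omega
      have e3 : (i + j) % 8 = (i % 64 + j - 64) % 8 := by omega
      rw [w_eq2, H2, if_neg hc, e1, e2, e3]
  obtain ⟨j, hjd, hne⟩ := chk_small (w (i/64)) (w_lt4 _) (w (i/64 + 1)) (w_lt4 _)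
    (w_adj _) d h16 h2 (i % 64) (Nat.mod_lt _ (by norm_num))
  apply hne
  have k1 := key j (by omega)
  have k2 := key (j + d) (by omega)
  rw [show i + (j + d) = i + j + d by ring, show i % 64 + (j + d) = i % 64 + j + d by ring] at k2
  rw [← k1, ← k2]
  exact hw j hjd

theorem w_windows : ∀ d, 2 ≤ d → ∀ i, ¬(∀ j < d - 1, w (i + j) = w (i + j + d)) := by
  intro d
  induction d using Nat.strong_induction_on with
  | _ d IH =>
    intro h2 i hw
    by_cases h16 : d < 16
    · exact w_small d i h2 h16 hw
    · push_neg at h16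
      set q := (i + 7) / 8 with hq
      have hpq : i ≤ 8 * q ∧ 8 * q ≤ i + 7 := by omega
      have hblock : ∀ j < 8, w (8 * q + d + j) = B (w q) j := by
        intro j hj
        have h1 : w (8 * q + j) = w (8 * q + d + j) := by
          have h0 := hw (8 * q + j - i) (by omega)
          have e1 : i + (8 * q + j - i) = 8 * q + j := by omega
          rw [e1] at h0
          rwa [show 8 * q + d + j = 8 * q + j + d by ring]
        rw [← h1, w_eq]
        have e1 : (8 * q + j) / 8 = q := by omega
        have e2 : (8 * q + j) % 8 = j := by omega
        rw [e1, e2]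
      have hdiv : (8 * q + d) % 8 = 0 := w_sync _ _ (w_lt4 q) hblock
      have hd8 : d % 8 = 0 := by omega
      set δ := d / 8 with hδ
      have hδ2 : 2 ≤ δ := by omega
      have hδd : δ < d := by omega
      apply IH δ hδd hδ2 q
      intro j' hj'
      apply chk_inj _ (w_lt4 (q + j')) _ (w_lt4 (q + j' + δ))
      intro l hl
      have e1 : B (w (q + j')) l = w (8 * (q + j') + l) := by
        rw [w_eq (8 * (q + j') + l)]
        have d1 : (8 * (q + j') + l) / 8 = q + j' := by omega
        have d2 : (8 * (q + j') + l) % 8 = l := by omega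
        rw [d1, d2]
      have e2 : B (w (q + j' + δ)) l = w (8 * (q + j' + δ) + l) := by
        rw [w_eq (8 * (q + j' + δ) + l)]
        have d1 : (8 * (q + j' + δ) + l) / 8 = q + j' + δ := by omega
        have d2 : (8 * (q + j' + δ) + l) % 8 = l := by omega
        rw [d1, d2]
      rw [e1, e2]
      have h0 := hw (8 * (q + j') + l - i) (by omega)
      have f1 : i + (8 * (q + j') + l - i) = 8 * (q + j') + l := by omega
      rw [f1] at h0
      rwa [show 8 * (q + j' + δ) + l = 8 * (q + j') + l + d by omega]

theorem w_dist2 (n : ℕ) : w n ≠ w (n + 2) := by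
  intro h
  exact w_windows 2 le_rfl n (by intro j hj; interval_cases j; simpa using h) 

theorem w_squarefree : ∀ d, 1 ≤ d → ∀ i, ¬(∀ j < d, w (i + j) = w (i + j + d)) := by
  intro d h1 i hw
  rcases Nat.lt_or_ge d 2 with h | h
  · have : d = 1 := by omega
    subst this
    exact w_adj i (by simpa using hw 0 (by norm_num))
  · exact w_windows d h i (fun j hj => hw j (by omega))


/-- Intermediate value property of ±1 walks on ℕ. -/
theorem walk_ivt (x : ℕ → ℕ) (n : ℕ)
    (hadj : ∀ i < n, x (i+1) = x i + 1 ∨ x i = x (i+1) + 1) :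
    ∀ b ≤ n, ∀ a ≤ b, ∀ v, ((x a ≤ v ∧ v ≤ x b) ∨ (x b ≤ v ∧ v ≤ x a)) →
      ∃ i, a ≤ i ∧ i ≤ b ∧ x i = v := by
  intro b
  induction b with
  | zero =>
    intro _ a ha v hv
    have h0 : a = 0 := by omega
    subst h0
    exact ⟨0, le_rfl, le_rfl, by omega⟩
  | succ b IH =>
    intro hbn a ha v hv
    rcases Nat.lt_or_ge a (b+1) with hab | hab
    · have hstep := hadj b (by omega)
      by_cases hker : (x a ≤ v ∧ v ≤ x b) ∨ (x b ≤ v ∧ v ≤ x a)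
      · obtain ⟨i, h1, h2, h3⟩ := IH (by omega) a (by omega) v hker
        exact ⟨i, h1, by omega, h3⟩
      · exact ⟨b+1, by omega, le_rfl, by omega⟩
    · have h0 : a = b + 1 := by omega
      subst h0
      exact ⟨b + 1, le_rfl, le_rfl, by omega⟩

theorem walk_lemma (t : ℕ) (ht : 0 < t) (x : ℕ → ℕ)
    (hadj : ∀ i, i + 1 < 2 * t → x (i+1) = x i + 1 ∨ x i = x (i+1) + 1)
    (hcol : ∀ i < t, w (x i) = w (x (t + i)))
    (hne : ∀ i < t, x i ≠ x (t + i)) : False := by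
  rcases Nat.lt_or_ge t 2 with ht1 | ht2
  · -- t = 1
    have et : t = 1 := by omega
    subst et
    have hc := hcol 0 (by norm_num)
    norm_num at hc
    rcases hadj 0 (by norm_num) with h | h
    · rw [h] at hc; exact w_adj (x 0) hc
    · rw [h] at hc; exact w_adj (x 1) hc.symm
  -- turn synchronisation
  have TS : ∀ i', i' + 2 ≤ t - 1 →
      (x (i'+2) = x i' ↔ x (t+i'+2) = x (t+i')) := by
    intro i' hi'
    have hc0 := hcol i' (by omega)
    have hc2 := hcol (i'+2) (by omega)
    have e2 : t + (i'+2) = t+i'+2 := by ring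
    rw [e2] at hc2
    have ha1 := hadj i' (by omega)
    have ha2 := hadj (i'+1) (by omega)
    have ha3 := hadj (t+i') (by omega)
    have ha4 := hadj (t+i'+1) (by omega)
    rw [show i'+1+1 = i'+2 by ring] at ha2
    rw [show t+i'+1+1 = t+i'+2 by ring] at ha4
    constructor
    · intro hx
      have hc : w (x (t+i'+2)) = w (x (t+i')) := by rw [← hc2, ← hc0, hx]
      rcases ha3 with h3 | h3 <;> rcases ha4 with h4 | h4
      · exfalso
        rw [h4, h3] at hc
        exact w_dist2 (x (t+i')) hc.symm
      · omega
      · omega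
      · exfalso
        rw [show x (t+i') = x (t+i'+2) + 2 by omega] at hc
        exact w_dist2 (x (t+i'+2)) hc
    · intro hx
      have hc : w (x (i'+2)) = w (x i') := by rw [hc2, hc0, hx]
      rcases ha1 with h1 | h1 <;> rcases ha2 with h2 | h2
      · exfalso
        rw [h2, h1] at hc
        exact w_dist2 (x i') hc.symm
      · omega
      · omega
      · exfalso
        rw [show x i' = x (i'+2) + 2 by omega] at hc
        exact w_dist2 (x (i'+2)) hc
  -- min and max of first half
  obtain ⟨im, him, hmin⟩ := (Finset.range t).exists_min_image x ⟨0, by simp [ht]⟩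
  obtain ⟨iM, hiM, hmax⟩ := (Finset.range t).exists_max_image x ⟨0, by simp [ht]⟩
  rw [Finset.mem_range] at him hiM
  have hmin' : ∀ i < t, x im ≤ x i := fun i hi => hmin i (Finset.mem_range.mpr hi)
  have hmax' : ∀ i < t, x i ≤ x iM := fun i hi => hmax i (Finset.mem_range.mpr hi)
  set m := x im with hm
  set M := x iM with hM
  -- IVT on first half
  have IVT : ∀ v, m ≤ v → v ≤ M → ∃ i < t, x i = v := by
    intro v h1 h2
    rcases le_or_gt im iM with hle | hlt
    · obtain ⟨i, hi1, hi2, hi3⟩ := walk_ivt x (t-1)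
        (fun i hi => hadj i (by omega)) iM (by omega) im hle v (by omega)
      exact ⟨i, by omega, hi3⟩
    · obtain ⟨i, hi1, hi2, hi3⟩ := walk_ivt x (t-1)
        (fun i hi => hadj i (by omega)) im (by omega) iM (by omega) v (by omega)
      exact ⟨i, by omega, hi3⟩
  have hcol0 := hcol 0 (by omega)
  have hne0 := hne 0 (by omega)
  simp only [Nat.add_zero] at hcol0 hne0
  -- dichotomy on directions
  by_cases hsame : (x 1 = x 0 + 1 ↔ x (t+1) = x t + 1)
  · -- translation case
    have C1 : ∀ i, i ≤ t - 2 → (x (i+1) = x i + 1 ↔ x (t+i+1) = x (t+i) + 1) := by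
      intro i
      induction i with
      | zero => intro _; simpa using hsame
      | succ i IH =>
        intro hle
        have hIH := IH (by omega)
        have hts := TS i (by omega)
        have ha1 := hadj i (by omega)
        have ha2 := hadj (i+1) (by omega)
        have ha3 := hadj (t+i) (by omega)
        have ha4 := hadj (t+i+1) (by omega)
        rw [show i+1+1 = i+2 by ring] at ha2
        rw [show t+i+1+1 = t+i+2 by ring] at ha4
        rw [show t+(i+1)+1 = t+i+2 by ring, show t+(i+1) = t+i+1 by ring,
          show i+1+1 = i+2 by ring]
        omega
    have C2 : ∀ i, i ≤ t - 1 → x (t+i) + x 0 = x i + x t := by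
      intro i
      induction i with
      | zero => intro _; simp only [Nat.add_zero]; omega
      | succ i IH =>
        intro hle
        have hIH := IH (by omega)
        have hc1 := C1 i (by omega)
        have ha1 := hadj i (by omega)
        have ha3 := hadj (t+i) (by omega)
        rw [show t+(i+1) = t+i+1 by ring]
        omega
    have hadjt := hadj (t-1) (by omega)
    rw [show t-1+1 = t by omega] at hadjt
    -- x (t-1) within [m, M]
    have hxt1 : m ≤ x (t-1) ∧ x (t-1) ≤ M := ⟨hmin' _ (by omega), hmax' _ (by omega)⟩
    have hx0 : m ≤ x 0 ∧ x 0 ≤ M := ⟨hmin' _ (by omega), hmax' _ (by omega)⟩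
    have hC20 := C2 0 (by omega)
    simp only [Nat.add_zero] at hC20
    rcases Nat.lt_or_ge (x 0) (x t) with hd | hd
    · -- d = x t - x 0 > 0
      set d := x t - x 0 with hdd
      have hd1 : 1 ≤ d := by omega
      apply w_squarefree d hd1 m
      intro j hj
      obtain ⟨i, hit, hxi⟩ := IVT (m + j) (by omega) (by omega)
      have hc := hcol i (by omega)
      have h2 := C2 i (by omega)
      rw [hxi] at hc h2
      rw [show m + j + d = x (t + i) by omega]
      exact hc
    · -- d = x 0 - x t > 0
      set d := x 0 - x t with hdd
      have hd1 : 1 ≤ d := by omega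
      have hmd : d ≤ m := by
        have h2' := C2 im (by omega)
        omega
      apply w_squarefree d hd1 (m - d)
      intro j hj
      obtain ⟨i, hit, hxi⟩ := IVT (m + j) (by omega) (by omega)
      have hc := hcol i (by omega)
      have h2 := C2 i (by omega)
      rw [hxi] at hc h2
      rw [show m - d + j + d = m + j by omega, show m - d + j = x (t + i) by omega]
      exact hc.symm
  · -- reflection case
    have C1 : ∀ i, i ≤ t - 2 → (x (i+1) = x i + 1 ↔ x (t+i) = x (t+i+1) + 1) := by
      intro i
      induction i with
      | zero =>
        intro _
        have ha3 := hadj t (by omega)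
        simp only [Nat.add_zero, Nat.zero_add]
        omega
      | succ i IH =>
        intro hle
        have hIH := IH (by omega)
        have hts := TS i (by omega)
        have ha1 := hadj i (by omega)
        have ha2 := hadj (i+1) (by omega)
        have ha3 := hadj (t+i) (by omega)
        have ha4 := hadj (t+i+1) (by omega)
        rw [show i+1+1 = i+2 by ring] at ha2
        rw [show t+i+1+1 = t+i+2 by ring] at ha4
        rw [show t+(i+1)+1 = t+i+2 by ring, show t+(i+1) = t+i+1 by ring,
          show i+1+1 = i+2 by ring]
        omega
    have C2 : ∀ i, i ≤ t - 1 → x (t+i) + x i = x 0 + x t := by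
      intro i
      induction i with
      | zero => intro _; simp only [Nat.add_zero]; omega
      | succ i IH =>
        intro hle
        have hIH := IH (by omega)
        have hc1 := C1 i (by omega)
        have ha1 := hadj i (by omega)
        have ha3 := hadj (t+i) (by omega)
        rw [show t+(i+1) = t+i+1 by ring]
        omega
    set S := x 0 + x t with hS
    have hrefl : ∀ p, m ≤ p → p ≤ M → w p = w (S - p) ∧ p ≤ S := by
      intro p h1 h2
      obtain ⟨i, hit, hxi⟩ := IVT p h1 h2
      have hc := hcol i (by omega)
      have h2' := C2 i (by omega)
      rw [hxi] at hc h2'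
      constructor
      · rw [show S - p = x (t + i) by omega]; exact hc
      · omega
    have hadjt := hadj (t-1) (by omega)
    rw [show t-1+1 = t by omega] at hadjt
    have hxt1 : m ≤ x (t-1) ∧ x (t-1) ≤ M := ⟨hmin' _ (by omega), hmax' _ (by omega)⟩
    have hx0 : m ≤ x 0 ∧ x 0 ≤ M := ⟨hmin' _ (by omega), hmax' _ (by omega)⟩
    have hx1 : m ≤ x 1 ∧ x 1 ≤ M := ⟨hmin' _ (by omega), hmax' _ (by omega)⟩
    have hadj0 := hadj 0 (by omega)
    simp only [Nat.zero_add] at hadj0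
    have hC20 := C2 0 (by omega)
    simp only [Nat.add_zero] at hC20
    have hmM : m < M := by omega
    -- S bounds: S ≤ 2M+1 and S ≥ 2m-1
    have hSle : S ≤ 2 * M + 1 := by omega
    have hSge : 2 * m ≤ S + 1 := by omega
    have hSpos : 1 ≤ S := by omega
    rcases Nat.even_or_odd S with ⟨z, hz⟩ | ⟨z, hz⟩
    · -- S = 2z
      have hzM : z ≤ M := by omega
      have hzm : m ≤ z := by omega
      rcases Nat.lt_or_ge m z with hmz | hmz
      · -- use p = z-1
        obtain ⟨hw1, _⟩ := hrefl (z-1) (by omega) (by omega)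
        rw [show S - (z-1) = (z-1) + 2 by omega] at hw1
        exact w_dist2 (z-1) hw1
      · -- m = z, use p = z+1
        obtain ⟨hw1, _⟩ := hrefl (z+1) (by omega) (by omega)
        have hz1 : 1 ≤ z := by omega
        rw [show S - (z+1) = z - 1 by omega] at hw1
        rw [show z + 1 = (z-1) + 2 by omega] at hw1
        exact w_dist2 (z-1) hw1.symm
    · -- S = 2z+1
      have hzM : z ≤ M := by omega
      have hzm : m ≤ z + 1 := by omega
      rcases le_or_gt m z with hmz | hmz
      · obtain ⟨hw1, _⟩ := hrefl z (by omega) (by omega)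
        rw [show S - z = z + 1 by omega] at hw1
        exact w_adj z hw1
      · -- z = m - 1, use p = m
        obtain ⟨hw1, _⟩ := hrefl m (by omega) (by omega)
        rw [show S - m = m - 1 by omega] at hw1
        rw [show m = (m-1)+1 by omega] at hw1
        exact w_adj (m-1) hw1.symm


section TreePart
variable {V : Type*} [DecidableEq V] {T : SimpleGraph V}

/-- In a tree, a vertex on a geodesic from `r` to `u` splits the distance. -/
theorem geodesic_split (h : T.IsTree) (r : V) {u x : V} (p : T.Walk r u) (hp : p.length = T.dist r u)
    (hx : x ∈ p.support) : T.dist r x + T.dist x u = T.dist r u := by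
  have h1 : T.dist r x ≤ (p.takeUntil x hx).length := SimpleGraph.dist_le _
  have h2 : T.dist x u ≤ (p.dropUntil x hx).length := SimpleGraph.dist_le _
  have h3 : (p.takeUntil x hx).length + (p.dropUntil x hx).length = p.length := by
    rw [← SimpleGraph.Walk.length_append, SimpleGraph.Walk.take_spec]
  have h4 : T.dist r u ≤ T.dist r x + T.dist x u :=
    h.isConnected.dist_triangle
  omega

/-- Adjacent vertices have different distances from the root. -/
theorem adj_dist_ne (h : T.IsTree) (r : V) {u v : V} (huv : T.Adj u v) : T.dist r u ≠ T.dist r v := by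
  intro heq
  obtain ⟨p, hp, hpl⟩ := h.isConnected.exists_path_of_dist r u
  obtain ⟨q, hq, hql⟩ := h.isConnected.exists_path_of_dist r v
  have hvp : v ∉ p.support := by
    intro hv
    have := geodesic_split h r p hpl hv
    have hd1 : T.dist v u = 1 := by
      rw [SimpleGraph.dist_comm, SimpleGraph.dist_eq_one_iff_adj]; exact huv
    omega
  have hp' : (p.concat huv).IsPath := by
    rw [← SimpleGraph.Walk.isPath_reverse_iff, SimpleGraph.Walk.reverse_concat]
    exact SimpleGraph.Walk.IsPath.cons hp.reverse
      (by rwa [SimpleGraph.Walk.support_reverse, List.mem_reverse])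
  have huniq := h.existsUnique_path r v
  have heq2 : q = p.concat huv := huniq.unique hq hp'
  have : q.length = (p.concat huv).length := by rw [heq2]
  rw [SimpleGraph.Walk.length_concat] at this
  omega

/-- Adjacent vertices: distance changes by exactly one. -/
theorem adj_dist_cases (h : T.IsTree) (r : V) {u v : V} (huv : T.Adj u v) :
    T.dist r v = T.dist r u + 1 ∨ T.dist r u = T.dist r v + 1 := by
  have h1 : T.dist r v ≤ T.dist r u + T.dist u v := h.isConnected.dist_triangle
  have h2 : T.dist r u ≤ T.dist r v + T.dist v u := h.isConnected.dist_triangle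
  have h3 : T.dist u v = 1 := SimpleGraph.dist_eq_one_iff_adj.mpr huv
  have h4 : T.dist v u = 1 := SimpleGraph.dist_eq_one_iff_adj.mpr huv.symm
  have h5 := adj_dist_ne h r huv
  omega

/-- Unique parent: two neighbours of `u` that are both closer to the root are equal. -/
theorem unique_parent (h : T.IsTree) (r : V) {u p₁ p₂ : V} (h1 : T.Adj u p₁) (h2 : T.Adj u p₂)
    (hd : T.dist r p₁ + 1 = T.dist r u) (hd2 : T.dist r p₂ + 1 = T.dist r u) :
    p₁ = p₂ := by
  obtain ⟨g1, hg1, hl1⟩ := h.isConnected.exists_path_of_dist r p₁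
  obtain ⟨g2, hg2, hl2⟩ := h.isConnected.exists_path_of_dist r p₂
  have hu1 : u ∉ g1.support := by
    intro hu
    have := geodesic_split h r g1 hl1 hu
    have : T.dist r u ≤ T.dist r p₁ := by omega
    omega
  have hu2 : u ∉ g2.support := by
    intro hu
    have := geodesic_split h r g2 hl2 hu
    have : T.dist r u ≤ T.dist r p₂ := by omega
    omega
  have hw1 : (g1.concat h1.symm).IsPath := by
    rw [← SimpleGraph.Walk.isPath_reverse_iff, SimpleGraph.Walk.reverse_concat]
    exact SimpleGraph.Walk.IsPath.cons hg1.reverse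
      (by rwa [SimpleGraph.Walk.support_reverse, List.mem_reverse])
  have hw2 : (g2.concat h2.symm).IsPath := by
    rw [← SimpleGraph.Walk.isPath_reverse_iff, SimpleGraph.Walk.reverse_concat]
    exact SimpleGraph.Walk.IsPath.cons hg2.reverse
      (by rwa [SimpleGraph.Walk.support_reverse, List.mem_reverse])
  have huniq := h.existsUnique_path r u
  have heq : g1.concat h1.symm = g2.concat h2.symm := (huniq.unique hw1 hw2)
  obtain ⟨hv, -⟩ := SimpleGraph.Walk.concat_inj heq
  exact hv

/-- The descent lemma: a walk staying at depth ≥ m with endpoints at depth m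
has equal endpoints. -/
theorem tree_walk_eq (h : T.IsTree) (r : V) (v : ℕ → V) :
    ∀ L m a, (∀ i, a ≤ i → i < a + L → T.Adj (v i) (v (i+1))) →
      (∀ i, a ≤ i → i ≤ a + L → m ≤ T.dist r (v i)) →
      T.dist r (v a) = m → T.dist r (v (a + L)) = m → v a = v (a + L) := by
  intro L
  induction L using Nat.strong_induction_on with
  | _ L IH =>
    intro m a hadj hge hda hdb
    rcases Nat.eq_zero_or_pos L with hL0 | hLpos
    · subst hL0; rfl
    · -- depth of v (a+1) is m+1
      have hstep := adj_dist_cases h r (hadj a le_rfl (by omega))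
      have hge1 : m ≤ T.dist r (v (a+1)) := hge (a+1) (by omega) (by omega)
      have hL1 : L ≠ 1 := by
        intro hL1
        subst hL1
        rw [show a + 1 = a + 1 by rfl] at hdb
        omega
      have hd1 : T.dist r (v (a+1)) = m + 1 := by omega
      -- find the first return to depth m
      have hexists : ∃ j, (a < j ∧ j ≤ a + L ∧ T.dist r (v j) = m) := ⟨a + L, by omega, le_rfl, hdb⟩
      classical
      set j₀ := Nat.find hexists with hj₀
      obtain ⟨hj₀a, hj₀b, hj₀d⟩ := Nat.find_spec hexists
      rw [← hj₀] at hj₀a hj₀b hj₀d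
      have hmin : ∀ j', a < j' → j' < j₀ → T.dist r (v j') ≠ m := by
        intro j' h1 h2 h3
        exact Nat.find_min hexists h2 ⟨h1, by omega, h3⟩
      have hinner : ∀ i, a + 1 ≤ i → i ≤ j₀ - 1 → m + 1 ≤ T.dist r (v i) := by
        intro i h1 h2
        have := hge i (by omega) (by omega)
        rcases Nat.eq_or_lt_of_le this with heq | hlt
        · exfalso; exact hmin i (by omega) (by omega) heq.symm
        · omega
      have hj₀2 : a + 2 ≤ j₀ := by
        rcases Nat.lt_or_ge j₀ (a+2) with hc | hc
        · exfalso
          have : j₀ = a + 1 := by omega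
          rw [this] at hj₀d
          omega
        · exact hc
      -- depth of v (j₀ - 1) is m+1
      have hadjj := hadj (j₀ - 1) (by omega) (by omega)
      rw [show j₀ - 1 + 1 = j₀ by omega] at hadjj
      have hstepj := adj_dist_cases h r hadjj
      have hdj1 : T.dist r (v (j₀ - 1)) = m + 1 := by
        have := hinner (j₀ - 1) (by omega) (by omega)
        omega
      -- apply IH on [a+1, j₀-1] at level m+1
      have heq1 : v (a+1) = v (j₀ - 1) := by
        have := IH (j₀ - 1 - (a+1)) (by omega) (m+1) (a+1)
          (fun i hi1 hi2 => hadj i (by omega) (by omega))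
          (fun i hi1 hi2 => hinner i (by omega) (by omega))
          hd1 (by rw [show a + 1 + (j₀ - 1 - (a+1)) = j₀ - 1 by omega]; exact hdj1)
        rwa [show a + 1 + (j₀ - 1 - (a+1)) = j₀ - 1 by omega] at this
      -- unique parent gives v a = v j₀
      have hpar : v a = v j₀ := by
        apply unique_parent h r (u := v (a+1))
          (h1 := (hadj a le_rfl (by omega)).symm)
          (h2 := by rw [heq1]; exact hadjj)
        · omega
        · omega
      -- IH on [j₀, a+L] at level m
      have heq2 : v j₀ = v (a + L) := by
        have := IH (a + L - j₀) (by omega) m j₀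
          (fun i hi1 hi2 => hadj i (by omega) (by omega))
          (fun i hi1 hi2 => hge i (by omega) (by omega))
          hj₀d (by rw [show j₀ + (a + L - j₀) = a + L by omega]; exact hdb)
        rwa [show j₀ + (a + L - j₀) = a + L by omega] at this
      rw [hpar, heq2]

end TreePart

/-- Propagation: one coincidence plus equal colours forces a boring walk. -/
theorem walk_propagate (t : ℕ) (ht : 0 < t) (x : ℕ → ℕ)
    (hadj : ∀ i, i + 1 < 2 * t → x (i+1) = x i + 1 ∨ x i = x (i+1) + 1)
    (hcol : ∀ i < t, w (x i) = w (x (t + i)))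
    (j : ℕ) (hj : j < t) (hEj : x j = x (t + j)) :
    ∀ i < t, x i = x (t + i) := by
  have step_fwd : ∀ k, k + 1 < t → x k = x (t + k) → x (k+1) = x (t + (k+1)) := by
    intro k hk hE
    have ha1 := hadj k (by omega)
    have ha2 := hadj (t + k) (by omega)
    have hc := hcol (k+1) (by omega)
    rw [show t + k + 1 = t + (k+1) by ring] at ha2
    rcases ha1 with h1 | h1 <;> rcases ha2 with h2 | h2
    · omega
    · exfalso
      rw [show x (k+1) = x (t+(k+1)) + 2 by omega] at hc
      exact w_dist2 (x (t+(k+1))) hc.symm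
    · exfalso
      rw [show x (t+(k+1)) = x (k+1) + 2 by omega] at hc
      exact w_dist2 (x (k+1)) hc
    · omega
  have step_bwd : ∀ k, k + 1 < t → x (k+1) = x (t + (k+1)) → x k = x (t + k) := by
    intro k hk hE
    have ha1 := hadj k (by omega)
    have ha2 := hadj (t + k) (by omega)
    have hc := hcol k (by omega)
    rw [show t + k + 1 = t + (k+1) by ring] at ha2
    rcases ha1 with h1 | h1 <;> rcases ha2 with h2 | h2
    · omega
    · exfalso
      rw [show x (t+k) = x k + 2 by omega] at hc
      exact w_dist2 (x k) hc
    · exfalso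
      rw [show x k = x (t+k) + 2 by omega] at hc
      exact w_dist2 (x (t+k)) hc.symm
    · omega
  -- forward from j
  have fwd : ∀ d, j + d < t → x (j + d) = x (t + (j + d)) := by
    intro d
    induction d with
    | zero => intro _; simpa using hEj
    | succ d IH =>
      intro hd
      have := step_fwd (j + d) (by omega) (IH (by omega))
      rwa [show j + (d+1) = j + d + 1 by ring]
  -- backward from j
  have bwd : ∀ d, d ≤ j → x (j - d) = x (t + (j - d)) := by
    intro d
    induction d with
    | zero => intro _; simpa using hEj
    | succ d IH =>
      intro hd
      have hk : j - (d+1) + 1 = j - d := by omega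
      have := step_bwd (j - (d+1)) (by omega) (by rw [hk]; exact IH (by omega))
      exact this
  intro i hi
  rcases le_or_gt j i with hle | hlt
  · have := fwd (i - j) (by omega)
    rwa [show j + (i - j) = i by omega] at this
  · have := bwd (j - i) (by omega)
    rwa [show j - (j - i) = i by omega] at this

/-- `v 0, …, v (n-1)` is a walk in `G`. -/
def IsWalkSeq {V : Type*} (G : SimpleGraph V) (n : ℕ) (v : ℕ → V) : Prop :=
  ∀ i, i + 1 < n → G.Adj (v i) (v (i + 1))

/-- A colouring is stroll-nonrepetitive if no stroll (a walk `(v 0,…,v (2t-1))`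
with `v i ≠ v (t+i)` for all `i < t`) is repetitively coloured. -/
def StrollNonrepetitive {V C : Type*} (G : SimpleGraph V) (φ : V → C) : Prop :=
  ∀ t : ℕ, 0 < t → ∀ v : ℕ → V, IsWalkSeq G (2 * t) v →
    (∀ i < t, v i ≠ v (t + i)) → ∃ i < t, φ (v i) ≠ φ (v (t + i))

/-- Every tree `T` satisfies `ρ(T) ≤ 4` (hence `π(T) ≤ 4`): it has a
stroll-nonrepetitive colouring with 4 colours. -/
theorem tree_rho_le_four {V : Type*} (T : SimpleGraph V) (h : T.IsTree) :
    ∃ φ : V → Fin 4, StrollNonrepetitive T φ := by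
  classical
  obtain ⟨r⟩ := h.isConnected.nonempty
  refine ⟨fun u => ⟨w (T.dist r u), w_lt4 _⟩, ?_⟩
  intro t ht v hW hst
  by_contra hcon
  push_neg at hcon
  set y : ℕ → ℕ := fun i => T.dist r (v i) with hy
  have hcolw : ∀ i < t, w (y i) = w (y (t + i)) := by
    intro i hi
    have := hcon i hi
    simpa [hy] using congrArg Fin.val this
  have hadjy : ∀ i, i + 1 < 2 * t → y (i+1) = y i + 1 ∨ y i = y (i+1) + 1 := by
    intro i hi
    exact adj_dist_cases h r (hW i hi)
  by_cases hall : ∀ i < t, y i ≠ y (t + i)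
  · exact walk_lemma t ht y hadjy hcolw hall
  · push_neg at hall
    obtain ⟨j, hjt, hEj⟩ := hall
    have hAll : ∀ i < t, y i = y (t + i) := walk_propagate t ht y hadjy hcolw j hjt hEj
    obtain ⟨i₀, hi₀, hmin⟩ := (Finset.range t).exists_min_image y ⟨0, by simp [ht]⟩
    rw [Finset.mem_range] at hi₀
    have hmin' : ∀ i < t, y i₀ ≤ y i := fun i hi => hmin i (Finset.mem_range.mpr hi)
    apply hst i₀ hi₀
    have := tree_walk_eq h r v t (y i₀) i₀
      (fun i hi1 hi2 => hW i (by omega))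
      (by
        intro i hi1 hi2
        rcases Nat.lt_or_ge i t with hc | hc
        · exact hmin' i hc
        · have hi' : i - t < t := by omega
          have := hAll (i - t) (by omega)
          rw [show t + (i - t) = i by omega] at this
          rw [show (T.dist r (v i) : ℕ) = y i by rfl, ← this]
          exact hmin' (i - t) (by omega))
      rfl
      (by
        have := hAll i₀ hi₀
        rw [show (T.dist r (v (i₀ + t)) : ℕ) = y (i₀ + t) by rfl, show i₀ + t = t + i₀ by ring, ← this])
    rwa [show i₀ + t = t + i₀ by ring] at this
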